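/- Let 0 < α < 1/2 and let u, v be mean-zero functions in L²(T). Define T^{+,−}(u,v) as the bilinear operator with symbol bounded by ⟨ξ⟩^α/(⟨ξ+η⟩^{α+1}·⟨η⟩^{1−α}). Then ‖T^{+,−}(u,v)‖_{H¹(T)} ≲ ‖u‖_{L²}·‖v‖_{L²}, where one ingredient is the bound ‖⟨∇⟩^{−α}[v·⟨∇⟩^{2α−1}u]‖_{L²(T)} ≲ ‖u‖_{L²(T)}·‖v‖_{L²(T)}. -/

import Mathlib

open MeasureTheory ENNReal NNReal

noncomputable def jap (x : ℝ) : ℝ := Real.sqrt (1 + x^2)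

/-- Bilinear operator at the level of Fourier coefficients: the `n`-th Fourier
coefficient is `∑_{ξ+η=n} σ(ξ,η) û(ξ) v̂(η)`. -/
noncomputable def Tcoef (σ : ℤ → ℤ → ℂ) (u v : ℤ → ℂ) (n : ℤ) : ℂ :=
  ∑' ξ : ℤ, σ ξ (n - ξ) * u ξ * v (n - ξ)


lemma ofReal_norm_eq_coe_nnnorm {E : Type*} [SeminormedAddGroup E] (a : E) :
    ENNReal.ofReal ‖a‖ = (‖a‖₊ : ℝ≥0∞) :=
  ENNReal.ofReal_eq_coe_nnreal (norm_nonneg a)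

lemma jap_pos (x : ℝ) : 0 < jap x := Real.sqrt_pos.2 (by positivity)
lemma one_le_jap (x : ℝ) : 1 ≤ jap x := by
  rw [jap]
  exact Real.one_le_sqrt.2 (by nlinarith) -- maybe wrong signature
lemma abs_le_jap (x : ℝ) : |x| ≤ jap x := by
  rw [jap, ← Real.sqrt_sq_eq_abs]
  exact Real.sqrt_le_sqrt (by nlinarith)
lemma jap_mono {x y : ℝ} (h : |x| ≤ |y|) : jap x ≤ jap y := by
  apply Real.sqrt_le_sqrt
  nlinarith [abs_nonneg x, sq_abs x, sq_abs y]
lemma jap_two_mul (x : ℝ) : jap (2*x) ≤ 2 * jap x := by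
  rw [jap, jap, show (2:ℝ) * Real.sqrt (1+x^2) = Real.sqrt (4*(1+x^2)) by
    rw [Real.sqrt_mul (by norm_num), show Real.sqrt 4 = 2 by
      rw [show (4:ℝ)=2^2 by norm_num, Real.sqrt_sq]; norm_num]]
  exact Real.sqrt_le_sqrt (by nlinarith)
lemma jap_add_le (x y : ℝ) : jap (x + y) ≤ 2 * max (jap x) (jap y) := by
  rcases le_total (|x|) (|y|) with h | h
  · calc jap (x+y) ≤ jap (2*y) := jap_mono (by
        rw [abs_mul, abs_two]
        calc |x+y| ≤ |x|+|y| := abs_add_le _ _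
          _ ≤ 2*|y| := by linarith)
      _ ≤ 2 * jap y := jap_two_mul y
      _ ≤ 2 * max (jap x) (jap y) := by have := le_max_right (jap x) (jap y); linarith
  · calc jap (x+y) ≤ jap (2*x) := jap_mono (by
        rw [abs_mul, abs_two]
        calc |x+y| ≤ |x|+|y| := abs_add_le _ _
          _ ≤ 2*|x| := by linarith)
      _ ≤ 2 * jap x := jap_two_mul x
      _ ≤ 2 * max (jap x) (jap y) := by have := le_max_left (jap x) (jap y); linarith

lemma summable_jap_rpow {p : ℝ} (hp : p < -1) : Summable (fun n : ℤ => jap n ^ p) := by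
  have h1 : 1 < -p := by linarith
  have hs := Real.summable_abs_int_rpow h1
  simp only [neg_neg] at hs
  refine Summable.of_nonneg_of_le (fun n => Real.rpow_nonneg (jap_pos _).le p)
    (f := fun n : ℤ => (if n = 0 then 1 else 0) + |(n:ℝ)| ^ p) ?_ ?_
  · intro n
    rcases eq_or_ne n 0 with rfl | hn
    · simp only [if_pos rfl]
      have h2 : jap ((0:ℤ):ℝ) = 1 := by rw [jap]; norm_num
      rw [h2, Real.one_rpow]
      have h0 : (0:ℝ) ≤ |((0:ℤ):ℝ)| ^ p := Real.rpow_nonneg (abs_nonneg _) p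
      simp only [if_true]
      push_cast at h0 ⊢
      linarith
    · simp only [if_neg hn, zero_add]
      have hx : (0:ℝ) < |(n:ℝ)| := by
        simp only [abs_pos]; exact_mod_cast hn
      exact Real.rpow_le_rpow_of_nonpos hx (abs_le_jap _) (by linarith)
  · refine Summable.add ?_ hs
    apply summable_of_finite_support
    apply Set.Finite.subset (Set.finite_singleton (0:ℤ))
    intro n hn
    simp only [Function.support, Set.mem_setOf_eq] at hn
    by_contra h
    simp only [Set.mem_singleton_iff] at h
    exact hn (by simp [h])

lemma ennreal_cs (f g : ℤ → ℝ≥0∞) :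
    (∑' n : ℤ, f n * g n)^2 ≤ (∑' n : ℤ, (f n)^2) * (∑' n : ℤ, (g n)^2) := by
  have hconj : (2:ℝ).HolderConjugate 2 := by
    rw [Real.holderConjugate_iff] <;> norm_num
  have H := ENNReal.lintegral_mul_le_Lp_mul_Lq (Measure.count : Measure ℤ) hconj
    (measurable_of_countable f).aemeasurable (measurable_of_countable g).aemeasurable
  simp only [Pi.mul_apply, lintegral_count] at H
  have h2 : ∀ x : ℝ≥0∞, x ^ (2:ℝ) = x ^ (2:ℕ) := fun x => by
    rw [← ENNReal.rpow_natCast x 2]; norm_num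
  simp only [h2] at H
  calc (∑' n : ℤ, f n * g n)^2
      ≤ ((∑' n : ℤ, (f n)^2) ^ (1/(2:ℝ)) * (∑' n : ℤ, (g n)^2) ^ (1/(2:ℝ)))^2 :=
        pow_le_pow_left₀ zero_le H 2
    _ = (∑' n : ℤ, (f n)^2) * (∑' n : ℤ, (g n)^2) := by
        rw [mul_pow, ← ENNReal.rpow_natCast ((∑' n : ℤ, (f n)^2) ^ (1/(2:ℝ))) 2,
          ← ENNReal.rpow_natCast ((∑' n : ℤ, (g n)^2) ^ (1/(2:ℝ))) 2,
          ← ENNReal.rpow_mul, ← ENNReal.rpow_mul]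
        norm_num

lemma ennreal_sq_add_le (x y : ℝ≥0∞) : (x + y)^2 ≤ 4*(x^2 + y^2) := by
  rcases le_total x y with h | h
  · calc (x+y)^2 ≤ (y+y)^2 := pow_le_pow_left₀ zero_le (by gcongr) 2
      _ = 4*y^2 := by ring
      _ ≤ 4*(x^2+y^2) := by gcongr; exact le_add_self
  · calc (x+y)^2 ≤ (x+x)^2 := pow_le_pow_left₀ zero_le (by gcongr) 2
      _ = 4*x^2 := by ring
      _ ≤ 4*(x^2+y^2) := by gcongr; exact le_self_add

lemma enorm_tsum_le (f : ℤ → ℂ) : (‖∑' i, f i‖₊ : ℝ≥0∞) ≤ ∑' i, (‖f i‖₊ : ℝ≥0∞) := by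
  by_cases h : Summable fun i => ‖f i‖₊
  · rw [← ENNReal.coe_tsum h]
    have hns : Summable fun i => ‖f i‖ := by
      simpa only [coe_nnnorm] using NNReal.summable_coe.2 h
    have h1 := norm_tsum_le_tsum_norm (f := f) hns
    rw [ENNReal.coe_le_coe, ← NNReal.coe_le_coe, NNReal.coe_tsum]
    simpa only [coe_nnnorm] using h1
  · rw [(not_iff_not.2 ENNReal.tsum_coe_ne_top_iff_summable).2 h |> not_ne_iff.1]
    exact le_top


lemma master (a b F H : ℤ → ℝ≥0∞)
    (hF : ∀ n : ℤ, F n ≤ 2 * ∑' ξ : ℤ, (H n + H (n-ξ)) * (a ξ * b (n-ξ))) :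
    ∑' n : ℤ, (F n)^2 ≤
      32 * (∑' n : ℤ, (H n)^2) * ((∑' ξ : ℤ, (a ξ)^2) * (∑' ξ : ℤ, (b ξ)^2)) := by
  set S := ∑' n : ℤ, (H n)^2 with hS
  set A2 := ∑' ξ : ℤ, (a ξ)^2 with hA2
  set B2 := ∑' ξ : ℤ, (b ξ)^2 with hB2
  set G : ℤ → ℝ≥0∞ := fun n => ∑' ξ : ℤ, a ξ * b (n-ξ) with hG
  set c : ℤ → ℝ≥0∞ := fun m => H m * b m with hc
  set Y : ℤ → ℝ≥0∞ := fun n => ∑' ξ : ℤ, a ξ * c (n-ξ) with hY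
  -- reindexing
  have hreb : ∀ (f : ℤ → ℝ≥0∞) (n : ℤ), ∑' ξ : ℤ, f (n - ξ) = ∑' m : ℤ, f m :=
    fun f n => Equiv.tsum_eq (Equiv.subLeft n) f
  have hreb2 : ∀ (f : ℤ → ℝ≥0∞) (ξ : ℤ), ∑' n : ℤ, f (n - ξ) = ∑' m : ℤ, f m :=
    fun f ξ => Equiv.tsum_eq (Equiv.subRight ξ) f
  -- split
  have hsplit : ∀ n : ℤ, F n ≤ 2 * (H n * G n + Y n) := by
    intro n
    refine (hF n).trans ?_
    gcongr
    simp only [hG, hY, hc]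
    rw [← ENNReal.tsum_mul_left, ← ENNReal.tsum_add]
    exact ENNReal.tsum_le_tsum fun ξ => le_of_eq (by ring)
  -- pointwise square bound
  have hsq : ∀ n : ℤ, (F n)^2 ≤ 16 * ((H n * G n)^2 + (Y n)^2) := by
    intro n
    calc (F n)^2 ≤ (2 * (H n * G n + Y n))^2 := pow_le_pow_left₀ zero_le (hsplit n) 2
      _ = 4 * (H n * G n + Y n)^2 := by ring
      _ ≤ 4 * (4 * ((H n * G n)^2 + (Y n)^2)) := by gcongr; exact ennreal_sq_add_le _ _
      _ = 16 * ((H n * G n)^2 + (Y n)^2) := by ring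
  -- bound on G
  have hGb : ∀ n : ℤ, (G n)^2 ≤ A2 * B2 := by
    intro n
    refine (ennreal_cs a (fun ξ => b (n - ξ))).trans ?_
    rw [hreb (fun m => (b m)^2) n]
  -- X part
  have hX : ∑' n : ℤ, (H n * G n)^2 ≤ S * (A2 * B2) := by
    calc ∑' n : ℤ, (H n * G n)^2 ≤ ∑' n : ℤ, (H n)^2 * (A2 * B2) := by
          apply ENNReal.tsum_le_tsum; intro n
          rw [mul_pow]; exact mul_le_mul_right (hGb n) _
      _ = S * (A2 * B2) := by rw [ENNReal.tsum_mul_right]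
  -- Y part
  have hchalf : ∀ x : ℝ≥0∞, x ^ ((1:ℝ)/2) * x ^ ((1:ℝ)/2) = x := by
    intro x
    rw [← ENNReal.rpow_add_of_nonneg _ _ (by norm_num) (by norm_num)]
    norm_num
  set C1 : ℝ≥0∞ := ∑' m : ℤ, c m with hC1
  have hYn : ∀ n : ℤ, (Y n)^2 ≤ C1 * ∑' ξ : ℤ, c (n-ξ) * (a ξ)^2 := by
    intro n
    have h1 : Y n = ∑' ξ : ℤ, (c (n-ξ)) ^ ((1:ℝ)/2) * ((c (n-ξ)) ^ ((1:ℝ)/2) * a ξ) := by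
      rw [hY]
      apply tsum_congr; intro ξ
      conv_rhs => rw [← mul_assoc, hchalf (c (n-ξ))]
      ring
    calc (Y n)^2 ≤ (∑' ξ : ℤ, ((c (n-ξ)) ^ ((1:ℝ)/2))^2) * (∑' ξ : ℤ, ((c (n-ξ)) ^ ((1:ℝ)/2) * a ξ)^2) := by
          rw [h1]; exact ennreal_cs _ _
      _ = (∑' ξ : ℤ, c (n-ξ)) * (∑' ξ : ℤ, c (n-ξ) * (a ξ)^2) := by
          congr 1
          · apply tsum_congr; intro ξ; rw [sq, hchalf]
          · apply tsum_congr; intro ξ; rw [mul_pow, sq (c (n-ξ) ^ ((1:ℝ)/2)), hchalf]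
      _ = C1 * ∑' ξ : ℤ, c (n-ξ) * (a ξ)^2 := by rw [hreb c n]
  have hYsum : ∑' n : ℤ, (Y n)^2 ≤ C1^2 * A2 := by
    calc ∑' n : ℤ, (Y n)^2 ≤ ∑' n : ℤ, C1 * ∑' ξ : ℤ, c (n-ξ) * (a ξ)^2 :=
          ENNReal.tsum_le_tsum hYn
      _ = C1 * ∑' n : ℤ, ∑' ξ : ℤ, c (n-ξ) * (a ξ)^2 := ENNReal.tsum_mul_left
      _ = C1 * ∑' ξ : ℤ, ∑' n : ℤ, c (n-ξ) * (a ξ)^2 := by rw [ENNReal.tsum_comm]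
      _ = C1 * ∑' ξ : ℤ, C1 * (a ξ)^2 := by
          congr 1; apply tsum_congr; intro ξ
          rw [ENNReal.tsum_mul_right, hreb2 c ξ, ← hC1]
      _ = C1^2 * A2 := by rw [ENNReal.tsum_mul_left]; ring
  have hC1sq : C1^2 ≤ S * B2 := by
    calc C1^2 = (∑' m : ℤ, H m * b m)^2 := by rw [hC1]
      _ ≤ S * B2 := ennreal_cs H b
  calc ∑' n : ℤ, (F n)^2 ≤ ∑' n : ℤ, 16 * ((H n * G n)^2 + (Y n)^2) :=
        ENNReal.tsum_le_tsum hsq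
    _ = 16 * (∑' n : ℤ, (H n * G n)^2 + ∑' n : ℤ, (Y n)^2) := by
        rw [ENNReal.tsum_mul_left, ENNReal.tsum_add]
    _ ≤ 16 * (S * (A2 * B2) + S * B2 * A2) := by
        gcongr
        exact hYsum.trans (by gcongr)
    _ = 32 * S * (A2 * B2) := by ring


lemma jap_neg (x : ℝ) : jap (-x) = jap x := by rw [jap, jap, neg_pow]; ring_nf

section
variable {α : ℝ} (hα : 0 < α) (hα' : α < 1/2)

-- base-monotone, nonpositive exponent
lemma rpow_anti {x y p : ℝ} (hx : 0 < x) (hxy : x ≤ y) (hp : p ≤ 0) : y ^ p ≤ x ^ p :=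
  Real.rpow_le_rpow_of_nonpos hx hxy hp

include hα hα' in
lemma kernel1 (x m : ℝ) :
    jap (x+m) * (jap x ^ α / (jap (x+m) ^ (α+1) * jap m ^ (1-α)))
      ≤ 2 * (jap (x+m) ^ (α-1) + jap m ^ (α-1)) := by
  set N := jap (x+m) with hN
  set X := jap x with hX
  set M := jap m with hM
  have hN1 : (1:ℝ) ≤ N := one_le_jap _
  have hM1 : (1:ℝ) ≤ M := one_le_jap _
  have hX1 : (1:ℝ) ≤ X := one_le_jap _
  have hN0 : (0:ℝ) < N := by linarith
  have hM0 : (0:ℝ) < M := by linarith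
  have hXle : X ≤ 2 * max N M := by
    have := jap_add_le (x+m) (-m)
    simpa [jap_neg, show x + m + -m = x by ring, ← hN, ← hM, ← hX] using this
  -- rewrite LHS as X^α * N^(-α) * M^(α-1)
  have hLHS : N * (X ^ α / (N ^ (α+1) * M ^ (1-α))) = X ^ α * N ^ (-α) * M ^ (α-1) := by
    have hden : (0:ℝ) < N ^ (α+1) * M ^ (1-α) := by positivity
    rw [mul_div_assoc', div_eq_iff hden.ne',
      show X ^ α * N ^ (-α) * M ^ (α-1) * (N ^ (α+1) * M ^ (1-α))
        = X ^ α * (N ^ (-α) * N ^ (α+1)) * (M ^ (α-1) * M ^ (1-α)) by ring,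
      ← Real.rpow_add hN0, ← Real.rpow_add hM0,
      show -α + (α+1) = 1 by ring, show (α-1) + (1-α) = 0 by ring,
      Real.rpow_one, Real.rpow_zero]
    ring
  rw [hLHS]
  have hNa : (0:ℝ) < N ^ (-α) := Real.rpow_pos_of_pos hN0 _
  have hMa : (0:ℝ) < M ^ (α-1) := Real.rpow_pos_of_pos hM0 _
  have hNam : (0:ℝ) ≤ N ^ (α-1) := (Real.rpow_pos_of_pos hN0 _).le
  rcases le_total M N with h | h
  · -- X ≤ 2N
    have hX2 : X ^ α ≤ 2 * N ^ α := by
      calc X ^ α ≤ (2*N) ^ α := Real.rpow_le_rpow (by linarith) (by rw [max_eq_left h] at hXle; exact hXle) hα.le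
        _ = 2 ^ α * N ^ α := Real.mul_rpow (by norm_num) hN0.le
        _ ≤ 2 * N ^ α := by
            have : (2:ℝ) ^ α ≤ 2 ^ (1:ℝ) := Real.rpow_le_rpow_of_exponent_le (by norm_num) (by linarith)
            rw [Real.rpow_one] at this
            have := Real.rpow_pos_of_pos hN0 α
            nlinarith
    calc X ^ α * N ^ (-α) * M ^ (α-1) ≤ (2 * N ^ α) * N ^ (-α) * M ^ (α-1) := by
          apply mul_le_mul_of_nonneg_right (mul_le_mul_of_nonneg_right hX2 hNa.le) hMa.le
      _ = 2 * M ^ (α-1) := by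
          rw [mul_assoc 2, ← Real.rpow_add hN0]
          norm_num
      _ ≤ 2 * (N ^ (α-1) + M ^ (α-1)) := by nlinarith
  · -- M ≥ N, X ≤ 2M
    have hX2 : X ^ α ≤ 2 * M ^ α := by
      calc X ^ α ≤ (2*M) ^ α := Real.rpow_le_rpow (by linarith) (by rw [max_eq_right h] at hXle; exact hXle) hα.le
        _ = 2 ^ α * M ^ α := Real.mul_rpow (by norm_num) hM0.le
        _ ≤ 2 * M ^ α := by
            have h2 : (2:ℝ) ^ α ≤ 2 ^ (1:ℝ) := Real.rpow_le_rpow_of_exponent_le (by norm_num) (by linarith)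
            rw [Real.rpow_one] at h2
            have := Real.rpow_pos_of_pos hM0 α
            nlinarith
    have hMN : M ^ (2*α-1) ≤ N ^ (2*α-1) := rpow_anti hN0 h (by linarith)
    calc X ^ α * N ^ (-α) * M ^ (α-1) ≤ (2 * M ^ α) * N ^ (-α) * M ^ (α-1) := by
          apply mul_le_mul_of_nonneg_right (mul_le_mul_of_nonneg_right hX2 hNa.le) hMa.le
      _ = 2 * (M ^ (2*α-1) * N ^ (-α)) := by
          rw [show (2:ℝ) * M ^ α * N ^ (-α) * M ^ (α-1) = 2 * ((M ^ α * M ^ (α-1)) * N ^ (-α)) by ring,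
            ← Real.rpow_add hM0]
          ring_nf
      _ ≤ 2 * (N ^ (2*α-1) * N ^ (-α)) := by nlinarith
      _ = 2 * N ^ (α-1) := by rw [← Real.rpow_add hN0]; ring_nf
      _ ≤ 2 * (N ^ (α-1) + M ^ (α-1)) := by nlinarith

include hα hα' in
lemma kernel2 (s t : ℝ) :
    jap s ^ (-α) * jap t ^ (2*α-1) ≤ jap s ^ (α-1) + jap t ^ (α-1) := by
  set N := jap s
  set M := jap t
  have hN1 : (1:ℝ) ≤ N := one_le_jap _
  have hM1 : (1:ℝ) ≤ M := one_le_jap _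
  have hN0 : (0:ℝ) < N := by linarith
  have hM0 : (0:ℝ) < M := by linarith
  rcases le_total M N with h | h
  · have h1 : N ^ (-α) ≤ M ^ (-α) := rpow_anti hM0 h (by linarith)
    have h2 : (0:ℝ) < M ^ (2*α-1) := Real.rpow_pos_of_pos hM0 _
    have h3 : N ^ (-α) * M ^ (2*α-1) ≤ M ^ (-α) * M ^ (2*α-1) := by nlinarith
    rw [← Real.rpow_add hM0] at h3
    have h4 : -α + (2*α-1) = α - 1 := by ring
    rw [h4] at h3
    have := (Real.rpow_pos_of_pos hN0 (α-1)).le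
    linarith
  · have h1 : M ^ (2*α-1) ≤ N ^ (2*α-1) := rpow_anti hN0 h (by linarith)
    have h2 : (0:ℝ) < N ^ (-α) := Real.rpow_pos_of_pos hN0 _
    have h3 : N ^ (-α) * M ^ (2*α-1) ≤ N ^ (-α) * N ^ (2*α-1) := by nlinarith
    rw [← Real.rpow_add hN0] at h3
    have h4 : -α + (2*α-1) = α - 1 := by ring
    rw [h4] at h3
    have := (Real.rpow_pos_of_pos hM0 (α-1)).le
    linarith
end



lemma sq_tsum_eq (u : ℤ → ℂ) (hu : Summable (fun n => ‖u n‖^2)) :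
    ∑' n : ℤ, ((‖u n‖₊ : ℝ≥0∞))^2 = ENNReal.ofReal (∑' n : ℤ, ‖u n‖^2) := by
  rw [ENNReal.ofReal_tsum_of_nonneg (fun n => sq_nonneg _) hu]
  apply tsum_congr; intro n
  rw [← ofReal_norm_eq_coe_nnnorm, ← ENNReal.ofReal_pow (norm_nonneg _)]

lemma finishing (Sr : ℝ) (hSr0 : 0 ≤ Sr) (f : ℤ → ℝ) (hf0 : ∀ n, 0 ≤ f n)
    (U V : ℝ) (hU : 0 ≤ U) (hV : 0 ≤ V)
    (hbound : ∑' n : ℤ, ENNReal.ofReal (f n) ≤ ENNReal.ofReal (32 * Sr * (U * V))) :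
    Real.sqrt (∑' n : ℤ, f n) ≤ (1 + Real.sqrt (32*Sr)) * Real.sqrt U * Real.sqrt V := by
  have hfs : Summable f := by
    have hne : (∑' n : ℤ, ENNReal.ofReal (f n)) ≠ ⊤ :=
      ne_top_of_le_ne_top ENNReal.ofReal_ne_top hbound
    have heq : ∀ n, ENNReal.ofReal (f n) = ((f n).toNNReal : ℝ≥0∞) := fun n => rfl
    rw [funext heq] at hne
    have hsn := ENNReal.tsum_coe_ne_top_iff_summable.1 hne
    have hco := NNReal.summable_coe.2 hsn
    refine hco.congr fun n => ?_
    simp [Real.coe_toNNReal _ (hf0 n)]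
  have h1 : ENNReal.ofReal (∑' n : ℤ, f n) ≤ ENNReal.ofReal (32 * Sr * (U * V)) := by
    rw [ENNReal.ofReal_tsum_of_nonneg hf0 hfs]; exact hbound
  have h2 : ∑' n : ℤ, f n ≤ 32 * Sr * (U * V) :=
    (ENNReal.ofReal_le_ofReal_iff (by positivity)).1 h1
  calc Real.sqrt (∑' n : ℤ, f n) ≤ Real.sqrt (32 * Sr * (U * V)) := Real.sqrt_le_sqrt h2
    _ = Real.sqrt (32*Sr) * (Real.sqrt U * Real.sqrt V) := by
        rw [Real.sqrt_mul (by positivity), Real.sqrt_mul hU]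
    _ ≤ (1 + Real.sqrt (32*Sr)) * Real.sqrt U * Real.sqrt V := by
        have h4 : (0:ℝ) ≤ Real.sqrt U * Real.sqrt V := by positivity
        nlinarith [Real.sqrt_nonneg (32*Sr)]

theorem TPM_L2_L2_to_H1 (α : ℝ) (hα : 0 < α) (hα' : α < 1/2) :
    ∃ C : ℝ, 0 < C ∧
      -- the `H¹ × H¹ → L²` bound for `T^{+,-}`
      (∀ (σ : ℤ → ℤ → ℂ) (u v : ℤ → ℂ),
        u 0 = 0 → v 0 = 0 →
        Summable (fun n => ‖u n‖^2) → Summable (fun n => ‖v n‖^2) →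
        (∀ ξ η : ℤ, ξ * η * (ξ + η) = 0 → σ ξ η = 0) →
        (∀ ξ η : ℤ, ‖σ ξ η‖ ≤
            jap ξ ^ α / (jap ((ξ : ℝ) + η) ^ (α + 1) * jap η ^ (1 - α))) →
        Real.sqrt (∑' n : ℤ, jap n ^ 2 * ‖Tcoef σ u v n‖^2)
          ≤ C * Real.sqrt (∑' n : ℤ, ‖u n‖^2) * Real.sqrt (∑' n : ℤ, ‖v n‖^2)) ∧
      -- the ingredient: `‖⟨∇⟩^{-α}[v ⟨∇⟩^{2α-1}u]‖_{L²} ≲ ‖u‖_{L²} ‖v‖_{L²}`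
      (∀ (u v : ℤ → ℂ),
        Summable (fun n => ‖u n‖^2) → Summable (fun n => ‖v n‖^2) →
        Real.sqrt (∑' n : ℤ, ‖(jap n ^ (-α) : ℝ) *
            (∑' ξ : ℤ, v ξ * ((jap ((n : ℝ) - ξ) ^ (2*α - 1) : ℝ) * u (n - ξ)))‖^2)
          ≤ C * Real.sqrt (∑' n : ℤ, ‖u n‖^2) * Real.sqrt (∑' n : ℤ, ‖v n‖^2)) := by
  have hp : 2*α - 2 < -1 := by linarith
  have hSsum : Summable (fun n : ℤ => jap n ^ (2*α-2)) := summable_jap_rpow hp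
  set Sr : ℝ := ∑' n : ℤ, jap n ^ (2*α-2) with hSr
  have hSr0 : 0 ≤ Sr := tsum_nonneg fun n => Real.rpow_nonneg (jap_pos _).le _
  set H : ℤ → ℝ≥0∞ := fun n => ENNReal.ofReal (jap n ^ (α-1)) with hH
  have hHS : ∑' n : ℤ, (H n)^2 = ENNReal.ofReal Sr := by
    rw [hSr, ENNReal.ofReal_tsum_of_nonneg (fun n => Real.rpow_nonneg (jap_pos _).le _) hSsum]
    apply tsum_congr; intro n
    rw [hH, ← ENNReal.ofReal_pow (Real.rpow_nonneg (jap_pos _).le _)]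
    congr 1
    rw [← Real.rpow_natCast (jap n ^ (α-1)) 2, ← Real.rpow_mul (jap_pos _).le]
    norm_num
    ring_nf
  refine ⟨1 + Real.sqrt (32*Sr), by positivity, ?_, ?_⟩
  · -- part 1
    intro σ u v _ _ hu hv _ hσ
    set F : ℤ → ℝ≥0∞ := fun n => ENNReal.ofReal (jap n) * (‖Tcoef σ u v n‖₊ : ℝ≥0∞) with hF
    have hFle : ∀ n : ℤ, F n ≤ 2 * ∑' ξ : ℤ,
        (H n + H (n-ξ)) * ((‖u ξ‖₊ : ℝ≥0∞) * (‖v (n-ξ)‖₊ : ℝ≥0∞)) := by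
      intro n
      rw [← ENNReal.tsum_mul_left]
      calc F n ≤ ENNReal.ofReal (jap n) * ∑' ξ : ℤ, (‖σ ξ (n-ξ) * u ξ * v (n-ξ)‖₊ : ℝ≥0∞) := by
            simp only [hF]
            exact mul_le_mul_right (enorm_tsum_le fun ξ => σ ξ (n-ξ) * u ξ * v (n-ξ)) _
        _ = ∑' ξ : ℤ, ENNReal.ofReal (jap n) * (‖σ ξ (n-ξ) * u ξ * v (n-ξ)‖₊ : ℝ≥0∞) :=
            ENNReal.tsum_mul_left.symm
        _ ≤ _ := by
            apply ENNReal.tsum_le_tsum; intro ξ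
            have hnn : (‖σ ξ (n-ξ) * u ξ * v (n-ξ)‖₊ : ℝ≥0∞)
                = (‖σ ξ (n-ξ)‖₊ : ℝ≥0∞) * ((‖u ξ‖₊ : ℝ≥0∞) * (‖v (n-ξ)‖₊ : ℝ≥0∞)) := by
              push_cast [nnnorm_mul]; ring
            rw [hnn, ← mul_assoc]
            have hxm : ((ξ:ℝ)) + (((n-ξ:ℤ)):ℝ) = (n:ℝ) := by push_cast; ring
            have hker := kernel1 hα hα' (ξ:ℝ) (((n-ξ:ℤ)):ℝ)
            rw [hxm] at hker
            have hreal : jap n * ‖σ ξ (n-ξ)‖ ≤ 2 * (jap n ^ (α-1) + jap ((n-ξ:ℤ):ℝ) ^ (α-1)) := by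
              refine le_trans ?_ hker
              apply mul_le_mul_of_nonneg_left _ (jap_pos _).le
              have hb := hσ ξ (n-ξ)
              rwa [hxm] at hb
            have hkey : ENNReal.ofReal (jap n) * (‖σ ξ (n-ξ)‖₊ : ℝ≥0∞) ≤ 2 * (H n + H (n-ξ)) := by
              calc ENNReal.ofReal (jap n) * (‖σ ξ (n-ξ)‖₊ : ℝ≥0∞)
                  = ENNReal.ofReal (jap n * ‖σ ξ (n-ξ)‖) := by
                    rw [ENNReal.ofReal_mul (jap_pos _).le, ofReal_norm_eq_coe_nnnorm]
                _ ≤ ENNReal.ofReal (2 * (jap n ^ (α-1) + jap ((n-ξ:ℤ):ℝ) ^ (α-1))) :=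
                    ENNReal.ofReal_le_ofReal hreal
                _ = 2 * (H n + H (n-ξ)) := by
                    rw [ENNReal.ofReal_mul (by norm_num),
                      ENNReal.ofReal_add (Real.rpow_nonneg (jap_pos _).le _)
                        (Real.rpow_nonneg (jap_pos _).le _)]
                    simp only [hH]
                    norm_num
            calc ENNReal.ofReal (jap n) * (‖σ ξ (n-ξ)‖₊ : ℝ≥0∞) * ((‖u ξ‖₊ : ℝ≥0∞) * (‖v (n-ξ)‖₊ : ℝ≥0∞))
                ≤ 2 * (H n + H (n-ξ)) * ((‖u ξ‖₊ : ℝ≥0∞) * (‖v (n-ξ)‖₊ : ℝ≥0∞)) :=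
                  mul_le_mul_left hkey _
              _ = 2 * ((H n + H (n-ξ)) * ((‖u ξ‖₊ : ℝ≥0∞) * (‖v (n-ξ)‖₊ : ℝ≥0∞))) := by ring
    have hm := master (fun ξ => (‖u ξ‖₊ : ℝ≥0∞)) (fun ξ => (‖v ξ‖₊ : ℝ≥0∞)) F H hFle
    rw [hHS, sq_tsum_eq u hu, sq_tsum_eq v hv] at hm
    apply finishing Sr hSr0 _ (fun n => by positivity) _ _
      (tsum_nonneg fun n => sq_nonneg _) (tsum_nonneg fun n => sq_nonneg _)
    calc ∑' n : ℤ, ENNReal.ofReal (jap n ^ 2 * ‖Tcoef σ u v n‖^2)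
        = ∑' n : ℤ, (F n)^2 := by
          apply tsum_congr; intro n
          simp only [hF]
          rw [← ofReal_norm_eq_coe_nnnorm, ← ENNReal.ofReal_mul (jap_pos _).le,
            ← ENNReal.ofReal_pow (mul_nonneg (jap_pos _).le (norm_nonneg _))]
          try rw [mul_pow]
      _ ≤ 32 * ENNReal.ofReal Sr *
            (ENNReal.ofReal (∑' n : ℤ, ‖u n‖^2) * ENNReal.ofReal (∑' n : ℤ, ‖v n‖^2)) := hm
      _ = ENNReal.ofReal (32 * Sr * ((∑' n : ℤ, ‖u n‖^2) * (∑' n : ℤ, ‖v n‖^2))) := by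
          rw [ENNReal.ofReal_mul (mul_nonneg (by norm_num) hSr0),
            ENNReal.ofReal_mul (by norm_num : (0:ℝ) ≤ 32),
            ENNReal.ofReal_mul (tsum_nonneg fun n => sq_nonneg (‖u n‖)),
            ENNReal.ofReal_ofNat]
          try ring
  · -- part 2
    intro u v hu hv
    set g : ℤ → ℂ := fun n =>
      ∑' ξ : ℤ, v ξ * ((jap ((n : ℝ) - ξ) ^ (2*α - 1) : ℝ) * u (n - ξ)) with hg
    set F : ℤ → ℝ≥0∞ := fun n => ENNReal.ofReal (jap n ^ (-α)) * (‖g n‖₊ : ℝ≥0∞) with hF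
    have hFle : ∀ n : ℤ, F n ≤ 2 * ∑' ξ : ℤ,
        (H n + H (n-ξ)) * ((‖v ξ‖₊ : ℝ≥0∞) * (‖u (n-ξ)‖₊ : ℝ≥0∞)) := by
      intro n
      rw [← ENNReal.tsum_mul_left]
      calc F n ≤ ENNReal.ofReal (jap n ^ (-α)) *
            ∑' ξ : ℤ, (‖v ξ * ((jap ((n : ℝ) - ξ) ^ (2*α - 1) : ℝ) * u (n - ξ))‖₊ : ℝ≥0∞) := by
            rw [hF, hg]; exact mul_le_mul_right (enorm_tsum_le _) _
        _ = ∑' ξ : ℤ, ENNReal.ofReal (jap n ^ (-α)) *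
              (‖v ξ * ((jap ((n : ℝ) - ξ) ^ (2*α - 1) : ℝ) * u (n - ξ))‖₊ : ℝ≥0∞) :=
            ENNReal.tsum_mul_left.symm
        _ ≤ _ := by
            apply ENNReal.tsum_le_tsum; intro ξ
            have hcast : (((n - ξ : ℤ)):ℝ) = ((n:ℝ) - (ξ:ℝ)) := by push_cast; ring
            have hr0 : (0:ℝ) ≤ jap ((n:ℝ) - ξ) ^ (2*α-1) := Real.rpow_nonneg (jap_pos _).le _
            have e1 : ENNReal.ofReal (jap ((n:ℝ) - ξ) ^ (2*α-1))
                = (‖(((jap ((n:ℝ) - ξ) ^ (2*α-1) : ℝ)) : ℂ)‖₊ : ℝ≥0∞) := by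
              rw [← ofReal_norm_eq_coe_nnnorm, Complex.norm_real, Real.norm_of_nonneg hr0]
            have hnn : (‖v ξ * ((jap ((n : ℝ) - ξ) ^ (2*α - 1) : ℝ) * u (n - ξ))‖₊ : ℝ≥0∞)
                = ENNReal.ofReal (jap ((n:ℝ) - ξ) ^ (2*α-1)) *
                  ((‖v ξ‖₊ : ℝ≥0∞) * (‖u (n-ξ)‖₊ : ℝ≥0∞)) := by
              rw [nnnorm_mul, nnnorm_mul, ENNReal.coe_mul, ENNReal.coe_mul, e1]
              ring
            rw [hnn, ← mul_assoc]
            have hkey : ENNReal.ofReal (jap n ^ (-α)) * ENNReal.ofReal (jap ((n:ℝ) - ξ) ^ (2*α-1))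
                ≤ 2 * (H n + H (n-ξ)) := by
              calc ENNReal.ofReal (jap n ^ (-α)) * ENNReal.ofReal (jap ((n:ℝ) - ξ) ^ (2*α-1))
                  = ENNReal.ofReal (jap n ^ (-α) * jap ((n:ℝ) - ξ) ^ (2*α-1)) := by
                    rw [ENNReal.ofReal_mul (Real.rpow_nonneg (jap_pos _).le _)]
                _ ≤ ENNReal.ofReal (jap n ^ (α-1) + jap ((n:ℝ) - ξ) ^ (α-1)) :=
                    ENNReal.ofReal_le_ofReal (kernel2 hα hα' _ _)
                _ = H n + H (n-ξ) := by
                    rw [ENNReal.ofReal_add (Real.rpow_nonneg (jap_pos _).le _)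
                      (Real.rpow_nonneg (jap_pos _).le _)]
                    simp only [hH]
                    rw [hcast]
                _ ≤ 2 * (H n + H (n-ξ)) :=
                    le_mul_of_one_le_left zero_le (by norm_num)
            calc ENNReal.ofReal (jap n ^ (-α)) * ENNReal.ofReal (jap ((n:ℝ) - ξ) ^ (2*α-1)) * ((‖v ξ‖₊ : ℝ≥0∞) * (‖u (n-ξ)‖₊ : ℝ≥0∞))
                ≤ 2 * (H n + H (n-ξ)) * ((‖v ξ‖₊ : ℝ≥0∞) * (‖u (n-ξ)‖₊ : ℝ≥0∞)) :=
                  mul_le_mul_left hkey _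
              _ = 2 * ((H n + H (n-ξ)) * ((‖v ξ‖₊ : ℝ≥0∞) * (‖u (n-ξ)‖₊ : ℝ≥0∞))) := by ring
    have hm := master (fun ξ => (‖v ξ‖₊ : ℝ≥0∞)) (fun ξ => (‖u ξ‖₊ : ℝ≥0∞)) F H hFle
    rw [hHS, sq_tsum_eq u hu, sq_tsum_eq v hv] at hm
    apply finishing Sr hSr0 _ (fun n => by positivity) _ _
      (tsum_nonneg fun n => sq_nonneg _) (tsum_nonneg fun n => sq_nonneg _)
    calc ∑' n : ℤ, ENNReal.ofReal (‖(jap n ^ (-α) : ℝ) *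
            (∑' ξ : ℤ, v ξ * ((jap ((n : ℝ) - ξ) ^ (2*α - 1) : ℝ) * u (n - ξ)))‖^2)
        = ∑' n : ℤ, (F n)^2 := by
          apply tsum_congr; intro n
          have hgn : ‖((jap (n:ℝ) ^ (-α) : ℝ) : ℂ) * g n‖ = jap (n:ℝ) ^ (-α) * ‖g n‖ := by
            rw [norm_mul, Complex.norm_real,
              Real.norm_of_nonneg (Real.rpow_nonneg (jap_pos _).le _)]
          change ENNReal.ofReal ((‖((jap (n:ℝ) ^ (-α) : ℝ) : ℂ) * g n‖)^2) = (F n)^2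
          rw [hgn]
          simp only [hF]
          rw [← ofReal_norm_eq_coe_nnnorm,
            ← ENNReal.ofReal_mul (Real.rpow_nonneg (jap_pos _).le _),
            ← ENNReal.ofReal_pow (mul_nonneg (Real.rpow_nonneg (jap_pos _).le _) (norm_nonneg _))]
      _ ≤ 32 * ENNReal.ofReal Sr *
            (ENNReal.ofReal (∑' n : ℤ, ‖v n‖^2) * ENNReal.ofReal (∑' n : ℤ, ‖u n‖^2)) := hm
      _ = ENNReal.ofReal (32 * Sr * ((∑' n : ℤ, ‖u n‖^2) * (∑' n : ℤ, ‖v n‖^2))) := by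
          rw [ENNReal.ofReal_mul (mul_nonneg (by norm_num) hSr0),
            ENNReal.ofReal_mul (by norm_num : (0:ℝ) ≤ 32),
            ENNReal.ofReal_mul (tsum_nonneg fun n => sq_nonneg (‖u n‖)),
            ENNReal.ofReal_ofNat]
          ring
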